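/- If α is irrational, then for every real θ and every ε > 0 there exists an integer m and a real φ with |θ' - (θ + 2παm)| < ε modulo 2π; consequently the spectrum of the almost Mathieu operator H(α,β,θ) does not depend on θ: Sp(H(α,β,θ)) = Sp(H(α,β,θ')) for all θ, θ'. -/

import Mathlib

abbrev ℓ2 : Type := lp (fun _ : ℤ => ℂ) 2

noncomputable section AMHelpers

open Complex
open scoped ENNReal

namespace AM

/-- membership in ℓ² from a pointwise bound by a multiple of an ℓ² element -/
lemma memℓp_of_bound {C : ℝ} (hC0 : 0 ≤ C) (f : ℓ2) (g : ℤ → ℂ)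
    (h : ∀ n, ‖g n‖ ≤ C * ‖f n‖) :
    Memℓp g 2 := by
  apply memℓp_gen
  have hf : Summable fun n => ‖(f : ∀ _ : ℤ, ℂ) n‖ ^ (2 : ℝ≥0∞).toReal :=
    (lp.memℓp f).summable (by norm_num)
  have : Summable fun n => (C * ‖(f : ∀ _ : ℤ, ℂ) n‖) ^ (2 : ℝ≥0∞).toReal := by
    have := hf.mul_left (C ^ (2 : ℝ≥0∞).toReal)
    refine this.congr fun n => ?_
    rw [Real.mul_rpow hC0 (norm_nonneg _)]
  refine this.of_nonneg_of_le (fun n => by positivity) fun n => ?_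
  have h0 : (0:ℝ) ≤ C * ‖(f : ∀ _ : ℤ, ℂ) n‖ := le_trans (norm_nonneg _) (h n)
  exact Real.rpow_le_rpow (norm_nonneg _) (h n) (by norm_num)

/-- the multiplication operator by a bounded sequence -/
def mulOp (w : ℤ → ℂ) (C : ℝ) (hC : ∀ n, ‖w n‖ ≤ C) : ℓ2 →L[ℂ] ℓ2 := by
  refine LinearMap.mkContinuous
    { toFun := fun f => ⟨fun n => w n * (f : ∀ _ : ℤ, ℂ) n, by
        exact memℓp_of_bound (le_trans (norm_nonneg _) (hC 0)) f _ (fun n => by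
          rw [norm_mul]; exact mul_le_mul_of_nonneg_right (hC n) (norm_nonneg _))⟩
      map_add' := fun f g => by
        apply lp.ext; funext n
        exact mul_add _ _ _
      map_smul' := fun c f => by
        apply lp.ext; funext n
        exact mul_left_comm _ _ _ }
    C (fun f => by
      have hC0 : 0 ≤ C := le_trans (norm_nonneg _) (hC 0)
      have key : ∀ n : ℤ, ‖w n * (f : ∀ _ : ℤ, ℂ) n‖ ^ (2 : ℝ≥0∞).toReal
          ≤ C ^ (2 : ℝ≥0∞).toReal * ‖(f : ∀ _ : ℤ, ℂ) n‖ ^ (2 : ℝ≥0∞).toReal := by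
        intro n
        rw [← Real.mul_rpow hC0 (norm_nonneg _)]
        refine Real.rpow_le_rpow (norm_nonneg _) ?_ (by norm_num)
        rw [norm_mul]
        exact mul_le_mul_of_nonneg_right (hC n) (norm_nonneg _)
      refine lp.norm_le_of_tsum_le (by norm_num) (by positivity) ?_
      have hsum : Summable fun n : ℤ => ‖(f : ∀ _ : ℤ, ℂ) n‖ ^ (2 : ℝ≥0∞).toReal :=
        (lp.memℓp f).summable (by norm_num)
      calc (∑' n : ℤ, ‖w n * (f : ∀ _ : ℤ, ℂ) n‖ ^ (2 : ℝ≥0∞).toReal)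
          ≤ ∑' n : ℤ, C ^ (2 : ℝ≥0∞).toReal * ‖(f : ∀ _ : ℤ, ℂ) n‖ ^ (2 : ℝ≥0∞).toReal :=
            Summable.tsum_le_tsum key ((hsum.mul_left _).of_nonneg_of_le
              (fun n => by positivity) key) (hsum.mul_left _)
        _ = C ^ (2 : ℝ≥0∞).toReal * ∑' n : ℤ, ‖(f : ∀ _ : ℤ, ℂ) n‖ ^ (2 : ℝ≥0∞).toReal :=
            tsum_mul_left
        _ = (C * ‖f‖) ^ (2 : ℝ≥0∞).toReal := by
            rw [Real.mul_rpow hC0 (norm_nonneg _), ← lp.norm_rpow_eq_tsum (by norm_num) f])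

@[simp] lemma mulOp_apply (w : ℤ → ℂ) (C : ℝ) (hC : ∀ n, ‖w n‖ ≤ C) (f : ℓ2) (n : ℤ) :
    (mulOp w C hC f : ∀ _ : ℤ, ℂ) n = w n * (f : ∀ _ : ℤ, ℂ) n := rfl

lemma mulOp_norm (w : ℤ → ℂ) (C : ℝ) (hC : ∀ n, ‖w n‖ ≤ C) : ‖mulOp w C hC‖ ≤ C :=
  LinearMap.mkContinuous_norm_le _ (le_trans (norm_nonneg _) (hC 0)) _

/-- the shift operator -/
def shiftOp (m : ℤ) : ℓ2 →L[ℂ] ℓ2 := by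
  refine LinearMap.mkContinuous
    { toFun := fun f => ⟨fun n => (f : ∀ _ : ℤ, ℂ) (n + m), by
        apply memℓp_gen
        have hf : Summable fun n => ‖(f : ∀ _ : ℤ, ℂ) n‖ ^ (2 : ℝ≥0∞).toReal :=
          (lp.memℓp f).summable (by norm_num)
        exact ((Equiv.addRight m).summable_iff
          (f := fun n => ‖(f : ∀ _ : ℤ, ℂ) n‖ ^ (2 : ℝ≥0∞).toReal)).mpr hf⟩
      map_add' := fun f g => rfl
      map_smul' := fun c f => rfl }
    1 (fun f => by
      rw [one_mul]
      refine lp.norm_le_of_tsum_le (by norm_num) (norm_nonneg _) ?_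
      have h2 := (Equiv.addRight m).tsum_eq
        (fun n => ‖(f : ∀ _ : ℤ, ℂ) n‖ ^ (2 : ℝ≥0∞).toReal)
      rw [lp.norm_rpow_eq_tsum (by norm_num) f]
      exact le_of_eq h2)

@[simp] lemma shiftOp_apply (m : ℤ) (f : ℓ2) (n : ℤ) :
    (shiftOp m f : ∀ _ : ℤ, ℂ) n = (f : ∀ _ : ℤ, ℂ) (n + m) := rfl

/-- shift as a unit -/
def shiftUnit (m : ℤ) : (ℓ2 →L[ℂ] ℓ2)ˣ where
  val := shiftOp m
  inv := shiftOp (-m)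
  val_inv := by
    ext f n
    simp [shiftOp_apply]
  inv_val := by
    ext f n
    simp [shiftOp_apply]

/-- density of the set `{2παm + 2πk}` for irrational `α` -/
lemma dense_orbit (α : ℝ) (hα : Irrational α) (x ε : ℝ) (hε : 0 < ε) :
    ∃ m k : ℤ, |x - (2 * Real.pi * α * m + 2 * Real.pi * k)| < ε := by
  have hπ : (0:ℝ) < Real.pi := Real.pi_pos
  set S : AddSubgroup ℝ := AddSubgroup.closure {α, 1} with hS
  have hdense : Dense (S : Set ℝ) := by
    rcases S.dense_or_cyclic with h | ⟨a, ha⟩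
    · exact h
    · exfalso
      have hαS : α ∈ S := AddSubgroup.subset_closure (by simp)
      have h1S : (1:ℝ) ∈ S := AddSubgroup.subset_closure (by simp)
      rw [ha] at hαS h1S
      obtain ⟨m, hm⟩ := AddSubgroup.mem_closure_singleton.mp hαS
      obtain ⟨k, hk⟩ := AddSubgroup.mem_closure_singleton.mp h1S
      have hk0 : (k:ℝ) ≠ 0 := by
        rintro h0
        rw [zsmul_eq_mul, h0, zero_mul] at hk
        exact one_ne_zero hk.symm
      refine hα ⟨(m : ℚ) / (k : ℚ), ?_⟩
      rw [zsmul_eq_mul] at hm hk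
      push_cast
      rw [div_eq_iff hk0, ← hm, mul_assoc, mul_comm a, hk, mul_one]
  obtain ⟨y, hyS, hy⟩ := Metric.mem_closure_iff.mp (hdense (x / (2 * Real.pi)))
    (ε / (2 * Real.pi)) (by positivity)
  obtain ⟨m, k, hmk⟩ := AddSubgroup.mem_closure_pair.mp hyS
  refine ⟨m, k, ?_⟩
  have hy' : |x / (2 * Real.pi) - y| < ε / (2 * Real.pi) := by
    rwa [Real.dist_eq] at hy
  have hxy : x - (2 * Real.pi * α * m + 2 * Real.pi * k)
      = (2 * Real.pi) * (x / (2 * Real.pi) - y) := by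
    rw [← hmk]
    push_cast [zsmul_eq_mul]
    field_simp
  rw [hxy, abs_mul, abs_of_pos (by positivity : (0:ℝ) < 2 * Real.pi)]
  calc 2 * Real.pi * |x / (2 * Real.pi) - y| < 2 * Real.pi * (ε / (2 * Real.pi)) := by
        exact mul_lt_mul_of_pos_left hy' (by positivity)
    _ = ε := by field_simp
  
/-- cosine is 1-Lipschitz -/
lemma abs_cos_sub_cos_le (x y : ℝ) : |Real.cos x - Real.cos y| ≤ |x - y| := by
  rw [Real.cos_sub_cos, abs_mul, abs_mul]
  have h1 : |Real.sin ((x + y) / 2)| ≤ 1 :=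
    abs_le.mpr ⟨Real.neg_one_le_sin _, Real.sin_le_one _⟩
  have h2 : |Real.sin ((x - y) / 2)| ≤ |x - y| / 2 := by
    calc |Real.sin ((x - y) / 2)| ≤ |(x - y) / 2| := Real.abs_sin_le_abs
      _ = |x - y| / 2 := by rw [abs_div]; norm_num
  have h3 : |(-2 : ℝ)| = 2 := by norm_num
  rw [h3]
  nlinarith [abs_nonneg (Real.sin ((x + y) / 2)), abs_nonneg (Real.sin ((x - y) / 2)),
    abs_nonneg (x - y)]

/-- a tridiagonal operator with real potential is self-adjoint -/
lemma isSelfAdjoint_of_form (T : ℓ2 →L[ℂ] ℓ2) (v : ℤ → ℝ) (C : ℝ)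
    (hv : ∀ n, ‖((v n : ℝ) : ℂ)‖ ≤ C)
    (hT : ∀ (ξ : ℓ2) (n : ℤ), (T ξ : ∀ _ : ℤ, ℂ) n
      = (ξ : ∀ _ : ℤ, ℂ) (n + 1) + (ξ : ∀ _ : ℤ, ℂ) (n - 1)
        + ((v n : ℝ) : ℂ) * (ξ : ∀ _ : ℤ, ℂ) n) :
    IsSelfAdjoint T := by
  rw [ContinuousLinearMap.isSelfAdjoint_iff_isSymmetric]
  intro ξ η
  have hsum : ∀ (x y : ℓ2),
      Summable (fun n : ℤ => (starRingEnd ℂ) ((x : ∀ _ : ℤ, ℂ) n) * (y : ∀ _ : ℤ, ℂ) n) := by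
    intro x y
    have := lp.summable_inner (𝕜 := ℂ) x y
    simpa [RCLike.inner_apply, mul_comm] using this
  have S1 : Summable (fun n : ℤ =>
      (starRingEnd ℂ) ((ξ : ∀ _ : ℤ, ℂ) (n + 1)) * (η : ∀ _ : ℤ, ℂ) n) :=
    hsum (shiftOp 1 ξ) η
  have S2 : Summable (fun n : ℤ =>
      (starRingEnd ℂ) ((ξ : ∀ _ : ℤ, ℂ) (n - 1)) * (η : ∀ _ : ℤ, ℂ) n) := by
    have := hsum (shiftOp (-1) ξ) η
    simpa [shiftOp_apply, sub_eq_add_neg] using this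
  have S3 : Summable (fun n : ℤ =>
      (starRingEnd ℂ) (((v n : ℝ) : ℂ) * (ξ : ∀ _ : ℤ, ℂ) n) * (η : ∀ _ : ℤ, ℂ) n) :=
    hsum (mulOp (fun n => ((v n : ℝ) : ℂ)) C hv ξ) η
  have T1 : Summable (fun n : ℤ =>
      (starRingEnd ℂ) ((ξ : ∀ _ : ℤ, ℂ) n) * (η : ∀ _ : ℤ, ℂ) (n + 1)) :=
    hsum ξ (shiftOp 1 η)
  have T2 : Summable (fun n : ℤ =>
      (starRingEnd ℂ) ((ξ : ∀ _ : ℤ, ℂ) n) * (η : ∀ _ : ℤ, ℂ) (n - 1)) := by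
    have := hsum ξ (shiftOp (-1) η)
    simpa [shiftOp_apply, sub_eq_add_neg] using this
  have T3 : Summable (fun n : ℤ =>
      (starRingEnd ℂ) ((ξ : ∀ _ : ℤ, ℂ) n) * (((v n : ℝ) : ℂ) * (η : ∀ _ : ℤ, ℂ) n)) :=
    hsum ξ (mulOp (fun n => ((v n : ℝ) : ℂ)) C hv η)
  rw [lp.inner_eq_tsum, lp.inner_eq_tsum]
  simp only [RCLike.inner_apply]
  simp only [mul_comm ((η : ∀ _ : ℤ, ℂ) _), mul_comm _ ((starRingEnd ℂ) ((ξ : ∀ _ : ℤ, ℂ) _))]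
  have hL : (fun n : ℤ => (starRingEnd ℂ) (((T : ℓ2 →ₗ[ℂ] ℓ2) ξ : ∀ _ : ℤ, ℂ) n)
        * (η : ∀ _ : ℤ, ℂ) n)
      = fun n : ℤ => ((starRingEnd ℂ) ((ξ : ∀ _ : ℤ, ℂ) (n + 1)) * (η : ∀ _ : ℤ, ℂ) n
        + (starRingEnd ℂ) ((ξ : ∀ _ : ℤ, ℂ) (n - 1)) * (η : ∀ _ : ℤ, ℂ) n)
        + (starRingEnd ℂ) (((v n : ℝ) : ℂ) * (ξ : ∀ _ : ℤ, ℂ) n) * (η : ∀ _ : ℤ, ℂ) n := by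
    funext n
    rw [show ((T : ℓ2 →ₗ[ℂ] ℓ2) ξ : ∀ _ : ℤ, ℂ) n = (T ξ : ∀ _ : ℤ, ℂ) n from rfl, hT ξ n]
    simp only [map_add]
    ring
  have hR : (fun n : ℤ => (starRingEnd ℂ) ((ξ : ∀ _ : ℤ, ℂ) n)
        * (((T : ℓ2 →ₗ[ℂ] ℓ2) η : ∀ _ : ℤ, ℂ) n))
      = fun n : ℤ => ((starRingEnd ℂ) ((ξ : ∀ _ : ℤ, ℂ) n) * (η : ∀ _ : ℤ, ℂ) (n + 1)
        + (starRingEnd ℂ) ((ξ : ∀ _ : ℤ, ℂ) n) * (η : ∀ _ : ℤ, ℂ) (n - 1))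
        + (starRingEnd ℂ) ((ξ : ∀ _ : ℤ, ℂ) n) * (((v n : ℝ) : ℂ) * (η : ∀ _ : ℤ, ℂ) n) := by
    funext n
    rw [show ((T : ℓ2 →ₗ[ℂ] ℓ2) η : ∀ _ : ℤ, ℂ) n = (T η : ∀ _ : ℤ, ℂ) n from rfl, hT η n]
    ring
  rw [hL, hR, Summable.tsum_add (S1.add S2) S3, Summable.tsum_add S1 S2, Summable.tsum_add (T1.add T2) T3,
    Summable.tsum_add T1 T2]
  have e1 : (∑' n : ℤ, (starRingEnd ℂ) ((ξ : ∀ _ : ℤ, ℂ) (n + 1)) * (η : ∀ _ : ℤ, ℂ) n)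
      = ∑' n : ℤ, (starRingEnd ℂ) ((ξ : ∀ _ : ℤ, ℂ) n) * (η : ∀ _ : ℤ, ℂ) (n - 1) := by
    rw [← (Equiv.subRight (1 : ℤ)).tsum_eq
      (fun n => (starRingEnd ℂ) ((ξ : ∀ _ : ℤ, ℂ) (n + 1)) * (η : ∀ _ : ℤ, ℂ) n)]
    refine tsum_congr fun n => ?_
    simp [Equiv.subRight]
  have e2 : (∑' n : ℤ, (starRingEnd ℂ) ((ξ : ∀ _ : ℤ, ℂ) (n - 1)) * (η : ∀ _ : ℤ, ℂ) n)
      = ∑' n : ℤ, (starRingEnd ℂ) ((ξ : ∀ _ : ℤ, ℂ) n) * (η : ∀ _ : ℤ, ℂ) (n + 1) := by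
    rw [← (Equiv.addRight (1 : ℤ)).tsum_eq
      (fun n => (starRingEnd ℂ) ((ξ : ∀ _ : ℤ, ℂ) (n - 1)) * (η : ∀ _ : ℤ, ℂ) n)]
    refine tsum_congr fun n => ?_
    simp [Equiv.addRight]
  have e3 : (∑' n : ℤ, (starRingEnd ℂ) (((v n : ℝ) : ℂ) * (ξ : ∀ _ : ℤ, ℂ) n)
        * (η : ∀ _ : ℤ, ℂ) n)
      = ∑' n : ℤ, (starRingEnd ℂ) ((ξ : ∀ _ : ℤ, ℂ) n)
        * (((v n : ℝ) : ℂ) * (η : ∀ _ : ℤ, ℂ) n) := by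
    refine tsum_congr fun n => ?_
    simp only [map_mul, Complex.conj_ofReal]
    ring
  rw [e1, e2, e3]
  ring

/-- inverse of a normal unit is normal -/
lemma isStarNormal_inv {A : Type*} [Monoid A] [StarMul A] (u : Aˣ)
    (h : IsStarNormal (u : A)) : IsStarNormal (↑u⁻¹ : A) := by
  constructor
  have h1 : Commute ((star u : Aˣ) : A) (u : A) := h.star_comm_self
  have h2 := (h1.units_inv_right).units_inv_left
  simpa using h2

/-- spectral perturbation for a self-adjoint operator -/
lemma exists_close_spectrum {a b : ℓ2 →L[ℂ] ℓ2} (ha : IsSelfAdjoint a) {z : ℂ}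
    (hz : z ∈ spectrum ℂ b) {ε : ℝ} (hab : ‖b - a‖ < ε) :
    ∃ μ ∈ spectrum ℂ a, ‖z - μ‖ < ε := by
  by_contra hcon
  push_neg at hcon
  have hε : 0 < ε := lt_of_le_of_lt (norm_nonneg _) hab
  have hz' : z ∉ spectrum ℂ a := by
    intro h
    have := hcon z h
    simp only [sub_self, norm_zero] at this
    linarith
  have hu : IsUnit (algebraMap ℂ (ℓ2 →L[ℂ] ℓ2) z - a) := spectrum.notMem_iff.mp hz'
  set u := hu.unit with huu
  have huval : (u : ℓ2 →L[ℂ] ℓ2) = algebraMap ℂ _ z - a := hu.unit_spec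
  have hcomm : ∀ w₁ w₂ : ℂ,
      ((algebraMap ℂ (ℓ2 →L[ℂ] ℓ2) w₁) - a) * ((algebraMap ℂ (ℓ2 →L[ℂ] ℓ2) w₂) - a)
      = ((algebraMap ℂ (ℓ2 →L[ℂ] ℓ2) w₂) - a) * ((algebraMap ℂ (ℓ2 →L[ℂ] ℓ2) w₁) - a) := by
    intro w₁ w₂
    simp only [mul_sub, sub_mul, ← map_mul, Algebra.commutes]
    rw [mul_comm w₁ w₂]
    abel
  have hnu : IsStarNormal (u : ℓ2 →L[ℂ] ℓ2) := by
    constructor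
    rw [Commute, SemiconjBy, huval]
    have hstar : star ((algebraMap ℂ (ℓ2 →L[ℂ] ℓ2) z) - a)
        = (algebraMap ℂ (ℓ2 →L[ℂ] ℓ2) ((starRingEnd ℂ) z)) - a := by
      rw [star_sub, ha.star_eq, ← algebraMap_star_comm]
      rfl
    rw [hstar]
    exact hcomm _ _
  haveI hnui := isStarNormal_inv u hnu
  have hinvnorm : ‖(↑u⁻¹ : ℓ2 →L[ℂ] ℓ2)‖ ≤ 1 / ε := by
    have hrad : spectralRadius ℂ (↑u⁻¹ : ℓ2 →L[ℂ] ℓ2) ≤ ENNReal.ofReal (1 / ε) := by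
      rw [spectralRadius]
      refine iSup₂_le fun μ hμ => ?_
      have hμ0 : μ ≠ 0 := by
        rintro rfl
        exact spectrum.zero_notMem ℂ u⁻¹.isUnit hμ
      have hinv : (μ⁻¹ : ℂ) ∈ spectrum ℂ (u : ℓ2 →L[ℂ] ℓ2) := by
        have := (spectrum.inv_mem_iff (r := Units.mk0 μ hμ0) (a := u⁻¹)).mp (by simpa using hμ)
        simpa using this
      rw [huval, ← spectrum.singleton_sub_eq] at hinv
      obtain ⟨w, hw, ν, hν, hwv⟩ := Set.mem_sub.mp hinv
      rw [Set.mem_singleton_iff] at hw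
      subst hw
      have h1 : ε ≤ ‖μ‖⁻¹ := by
        have := hcon ν hν
        rw [hwv] at this
        rwa [norm_inv] at this
      have hμn : (0:ℝ) < ‖μ‖ := norm_pos_iff.mpr hμ0
      have h2 : ‖μ‖ ≤ 1 / ε := by
        rw [le_div_iff₀ hε]
        calc ‖μ‖ * ε ≤ ‖μ‖ * ‖μ‖⁻¹ := by
              exact mul_le_mul_of_nonneg_left h1 (norm_nonneg _)
          _ = 1 := mul_inv_cancel₀ (ne_of_gt hμn)
      calc (‖μ‖₊ : ℝ≥0∞) = ENNReal.ofReal ‖μ‖ := (ofReal_norm μ).symm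
        _ ≤ ENNReal.ofReal (1 / ε) := ENNReal.ofReal_le_ofReal h2
    have heq := IsStarNormal.spectralRadius_eq_nnnorm (↑u⁻¹ : ℓ2 →L[ℂ] ℓ2)
    rw [heq] at hrad
    have hrad' : ENNReal.ofReal ‖(↑u⁻¹ : ℓ2 →L[ℂ] ℓ2)‖ ≤ ENNReal.ofReal (1 / ε) := by
      rw [ofReal_norm]; exact hrad
    exact (ENNReal.ofReal_le_ofReal_iff (by positivity)).mp hrad'
  set t := (↑u⁻¹ : ℓ2 →L[ℂ] ℓ2) * (b - a) with ht
  have htn : ‖t‖ < 1 := by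
    calc ‖t‖ ≤ ‖(↑u⁻¹ : ℓ2 →L[ℂ] ℓ2)‖ * ‖b - a‖ := norm_mul_le _ _
      _ ≤ (1 / ε) * ‖b - a‖ := mul_le_mul_of_nonneg_right hinvnorm (norm_nonneg _)
      _ < (1 / ε) * ε := mul_lt_mul_of_pos_left hab (by positivity)
      _ = 1 := by field_simp
  have hunit : IsUnit (algebraMap ℂ (ℓ2 →L[ℂ] ℓ2) z - b) := by
    have h1 : algebraMap ℂ (ℓ2 →L[ℂ] ℓ2) z - b = ↑u * (1 - t) := by
      rw [ht, mul_sub, mul_one, ← mul_assoc, u.mul_inv, one_mul, huval]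
      abel
    rw [h1]
    exact u.isUnit.mul (Units.oneSub t htn).isUnit
  exact spectrum.mem_iff.mp hz hunit

end AM

end AMHelpers

/-- For irrational `α`, the spectrum of the almost Mathieu operator `H(α,β,θ)`
does not depend on `θ`. -/
theorem almost_mathieu_spectrum_indep (α β : ℝ) (hα : Irrational α)
    (H : ℝ → (ℓ2 →L[ℂ] ℓ2))
    (hH : ∀ (θ : ℝ) (ξ : ℓ2) (n : ℤ),
      (H θ ξ : ∀ _ : ℤ, ℂ) n =
        (ξ : ∀ _ : ℤ, ℂ) (n + 1) + (ξ : ∀ _ : ℤ, ℂ) (n - 1) +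
          (2 * β * Real.cos (2 * Real.pi * α * n + θ) : ℝ) * (ξ : ∀ _ : ℤ, ℂ) n) :
    ∀ θ θ' : ℝ, spectrum ℂ (H θ) = spectrum ℂ (H θ') := by
  have hSA : ∀ ψ : ℝ, IsSelfAdjoint (H ψ) := by
    intro ψ
    refine AM.isSelfAdjoint_of_form (H ψ)
      (fun n => 2 * β * Real.cos (2 * Real.pi * α * n + ψ)) (2 * |β|)
      (fun n => ?_) (fun ξ n => hH ψ ξ n)
    rw [Complex.norm_real, Real.norm_eq_abs, abs_mul, abs_mul]
    have h1 : |Real.cos (2 * Real.pi * α * n + ψ)| ≤ 1 := Real.abs_cos_le_one _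
    have h2 : |(2:ℝ)| = 2 := by norm_num
    rw [h2]
    nlinarith [abs_nonneg β]
  have hdiff : ∀ ψ ψ' : ℝ, ‖H ψ - H ψ'‖ ≤ 2 * |β| * |ψ - ψ'| := by
    intro ψ ψ'
    have hb : ∀ n : ℤ, ‖((2 * β * (Real.cos (2 * Real.pi * α * n + ψ)
        - Real.cos (2 * Real.pi * α * n + ψ')) : ℝ) : ℂ)‖ ≤ 2 * |β| * |ψ - ψ'| := by
      intro n
      rw [Complex.norm_real, Real.norm_eq_abs, abs_mul, abs_mul]
      have h2 := AM.abs_cos_sub_cos_le (2 * Real.pi * α * n + ψ) (2 * Real.pi * α * n + ψ')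
      have h3 : (2 * Real.pi * α * n + ψ) - (2 * Real.pi * α * n + ψ') = ψ - ψ' := by ring
      rw [h3] at h2
      have h4 : |(2:ℝ)| = 2 := by norm_num
      rw [h4]
      nlinarith [abs_nonneg β, abs_nonneg (ψ - ψ'),
        abs_nonneg (Real.cos (2 * Real.pi * α * n + ψ) - Real.cos (2 * Real.pi * α * n + ψ'))]
    have heq : H ψ - H ψ' = AM.mulOp _ (2 * |β| * |ψ - ψ'|) hb := by
      ext ξ n
      simp only [ContinuousLinearMap.sub_apply, lp.coeFn_sub, Pi.sub_apply, hH,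
        AM.mulOp_apply]
      push_cast
      ring
    rw [heq]
    exact AM.mulOp_norm _ _ _
  have hconj : ∀ (ψ : ℝ) (m : ℤ),
      spectrum ℂ (H (ψ + 2 * Real.pi * α * m)) = spectrum ℂ (H ψ) := by
    intro ψ m
    have hop : H (ψ + 2 * Real.pi * α * m)
        = (AM.shiftUnit m : ℓ2 →L[ℂ] ℓ2) * H ψ * ((AM.shiftUnit m)⁻¹ : (ℓ2 →L[ℂ] ℓ2)ˣ) := by
      ext ξ n
      rw [hH]
      show _ = (AM.shiftOp m ((H ψ) (AM.shiftOp (-m) ξ)) : ∀ _ : ℤ, ℂ) n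
      rw [AM.shiftOp_apply, hH, AM.shiftOp_apply, AM.shiftOp_apply, AM.shiftOp_apply]
      have e1 : n + m + 1 + -m = n + 1 := by ring
      have e2 : n + m - 1 + -m = n - 1 := by ring
      have e3 : n + m + -m = n := by ring
      rw [e1, e2, e3]
      have e4 : Real.cos (2 * Real.pi * α * ((n : ℝ) + (m : ℝ)) + ψ)
          = Real.cos (2 * Real.pi * α * n + (ψ + 2 * Real.pi * α * m)) := by
        congr 1; ring
      have e5 : ((n + m : ℤ) : ℝ) = (n : ℝ) + (m : ℝ) := by push_cast; ring
      rw [e5, e4]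
    rw [hop]
    exact spectrum.units_conjugate
  have hper : ∀ (ψ : ℝ) (k : ℤ), H (ψ + 2 * Real.pi * k) = H ψ := by
    intro ψ k
    ext ξ n
    rw [hH, hH]
    have e : Real.cos (2 * Real.pi * α * n + (ψ + 2 * Real.pi * k))
        = Real.cos (2 * Real.pi * α * n + ψ) := by
      rw [show 2 * Real.pi * α * n + (ψ + 2 * Real.pi * k)
        = (2 * Real.pi * α * n + ψ) + k * (2 * Real.pi) by ring]
      exact Real.cos_add_int_mul_two_pi _ k
    rw [e]
  have key : ∀ θ θ' : ℝ, spectrum ℂ (H θ') ⊆ spectrum ℂ (H θ) := by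
    intro θ θ' z hz
    have hcl : IsClosed (spectrum ℂ (H θ)) := spectrum.isClosed _
    rw [← hcl.closure_eq, Metric.mem_closure_iff]
    intro ε hε
    have hδ0 : (0:ℝ) < ε / (2 * |β| + 1) := by positivity
    obtain ⟨m, k, hmk⟩ := AM.dense_orbit α hα (θ' - θ) _ hδ0
    set ψ := θ + (2 * Real.pi * α * m + 2 * Real.pi * k) with hψ
    have hspec : spectrum ℂ (H ψ) = spectrum ℂ (H θ) := by
      have h1 : ψ = (θ + 2 * Real.pi * α * m) + 2 * Real.pi * k := by rw [hψ]; ring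
      rw [h1, hper, hconj]
    have hnorm : ‖H θ' - H ψ‖ < ε := by
      have h1 : ‖H θ' - H ψ‖ ≤ 2 * |β| * |θ' - ψ| := hdiff θ' ψ
      have h2 : |θ' - ψ| < ε / (2 * |β| + 1) := by
        rw [hψ, show θ' - (θ + (2 * Real.pi * α * m + 2 * Real.pi * k))
          = θ' - θ - (2 * Real.pi * α * m + 2 * Real.pi * k) by ring]
        exact hmk
      calc ‖H θ' - H ψ‖ ≤ 2 * |β| * |θ' - ψ| := h1
        _ < (2 * |β| + 1) * (ε / (2 * |β| + 1)) := by
            nlinarith [abs_nonneg β, abs_nonneg (θ' - ψ)]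
        _ = ε := by field_simp
    obtain ⟨μ, hμ, hzμ⟩ := AM.exists_close_spectrum (hSA ψ) hz hnorm
    exact ⟨μ, hspec ▸ hμ, by rw [dist_eq_norm]; exact hzμ⟩
  intro θ θ'
  exact Set.Subset.antisymm (key θ' θ) (key θ θ')
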